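/- Let d ∈ ℕ, 1 ≤ p < ∞ and α, β > 0. There exists a constant C > 0, depending only on d, p, α, β (and not on the simplex), such that for every d-simplex T ⊂ ℝ^d of unit volume, E_{p;α,β}(T) ≥ C · (diam T)², where diam T is the Euclidean diameter of T. -/

import Mathlib

open MeasureTheory Metric Set

/-- The asymmetric `L_p`-error of best approximation of `Q(x) = ∑ xⱼ²` by affine
functions `x ↦ ⟪a, x⟫ + c` on the set `T ⊆ ℝ^d`. -/
noncomputable def Epab (d : ℕ) (p α β : ℝ) (T : Set (EuclideanSpace ℝ (Fin d))) : ℝ :=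
  ⨅ (a : EuclideanSpace ℝ (Fin d)) (c : ℝ),
    (∫ x in T,
      (α * max ((∑ j, x j ^ 2) - ((inner ℝ a x : ℝ) + c)) 0 +
        β * max (-((∑ j, x j ^ 2) - ((inner ℝ a x : ℝ) + c))) 0) ^ p) ^ (1 / p)

lemma key_identity {d : ℕ} (a : EuclideanSpace ℝ (Fin d)) (c : ℝ)
    (z₀ z₁ x : EuclideanSpace ℝ (Fin d)) :
    (2⁻¹ : ℝ) * ((∑ j, (((2⁻¹:ℝ) • (z₀ + x)) j) ^ 2)
        - ((inner ℝ a ((2⁻¹:ℝ) • (z₀ + x)) : ℝ) + c))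
      + 2⁻¹ * ((∑ j, (((2⁻¹:ℝ) • (z₁ + x)) j) ^ 2)
        - ((inner ℝ a ((2⁻¹:ℝ) • (z₁ + x)) : ℝ) + c))
      - ((∑ j, (((2⁻¹:ℝ) • ((2⁻¹:ℝ) • (z₀ + z₁) + x)) j) ^ 2)
        - ((inner ℝ a ((2⁻¹:ℝ) • ((2⁻¹:ℝ) • (z₀ + z₁) + x)) : ℝ) + c))
      = dist z₀ z₁ ^ 2 / 16 := by
  have hinner : ∀ y : EuclideanSpace ℝ (Fin d), (inner ℝ a y : ℝ) = ∑ j, a j * y j := fun y => by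
    simp [PiLp.inner_apply, RCLike.inner_apply, conj_trivial, mul_comm]
  have hdist : dist z₀ z₁ ^ 2 = ∑ j, (z₀ j - z₁ j) ^ 2 := by
    rw [EuclideanSpace.dist_eq, Real.sq_sqrt (by positivity)]
    simp [Real.dist_eq, sq_abs]
  rw [hdist, hinner, hinner, hinner, Finset.sum_div]
  simp only [PiLp.smul_apply, PiLp.add_apply, smul_eq_mul]
  have hq : 2⁻¹ * (∑ j : Fin d, (2⁻¹ * (z₀ j + x j)) ^ 2)
      + 2⁻¹ * (∑ j : Fin d, (2⁻¹ * (z₁ j + x j)) ^ 2)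
      - ∑ j : Fin d, (2⁻¹ * (2⁻¹ * (z₀ j + z₁ j) + x j)) ^ 2
      = ∑ j : Fin d, (z₀ j - z₁ j) ^ 2 / 16 := by
    rw [Finset.mul_sum, Finset.mul_sum, ← Finset.sum_add_distrib, ← Finset.sum_sub_distrib]
    exact Finset.sum_congr rfl fun j _ => by ring
  have hl : 2⁻¹ * (∑ j : Fin d, a j * (2⁻¹ * (z₀ j + x j)))
      + 2⁻¹ * (∑ j : Fin d, a j * (2⁻¹ * (z₁ j + x j)))
      - ∑ j : Fin d, a j * (2⁻¹ * (2⁻¹ * (z₀ j + z₁ j) + x j)) = 0 := by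
    rw [Finset.mul_sum, Finset.mul_sum, ← Finset.sum_add_distrib, ← Finset.sum_sub_distrib]
    exact Finset.sum_eq_zero fun j _ => by ring
  linarith [hq, hl]

lemma holder_aux {d : ℕ} {p : ℝ} (hp : 1 ≤ p) {T : Set (EuclideanSpace ℝ (Fin d))}
    (hTcomp : IsCompact T) (hvol : volume T = 1)
    {h : EuclideanSpace ℝ (Fin d) → ℝ} (hcont : Continuous h) (hnn : ∀ x, 0 ≤ h x) :
    ∫ x in T, h x ≤ (∫ x in T, h x ^ p) ^ (1 / p) := by
  have hTmeas : MeasurableSet T := hTcomp.isClosed.measurableSet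
  haveI : IsFiniteMeasure (volume.restrict T) :=
    ⟨by rw [Measure.restrict_apply_univ, hvol]; exact ENNReal.one_lt_top⟩
  rcases eq_or_lt_of_le hp with heq | hlt
  · simp [← heq, Real.rpow_one]
  · have hpq : p.HolderConjugate (Real.conjExponent p) := Real.HolderConjugate.conjExponent hlt
    have hMemh : MemLp h (ENNReal.ofReal p) (volume.restrict T) := by
      obtain ⟨M, hM⟩ := hTcomp.exists_bound_of_continuousOn hcont.continuousOn
      exact (memLp_top_of_bound hcont.aestronglyMeasurable.restrict M
        ((ae_restrict_iff' hTmeas).2 (Filter.Eventually.of_forall hM))).mono_exponent le_top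
    have hMem1 : MemLp (fun _ : EuclideanSpace ℝ (Fin d) => (1:ℝ))
        (ENNReal.ofReal (Real.conjExponent p)) (volume.restrict T) := memLp_const 1
    have H := integral_mul_le_Lp_mul_Lq_of_nonneg hpq
      (Filter.Eventually.of_forall hnn) (Filter.Eventually.of_forall fun _ => zero_le_one)
      hMemh hMem1
    simp only [mul_one, Real.one_rpow] at H
    have h1 : ∫ _x in T, (1:ℝ) = 1 := by rw [setIntegral_const, measureReal_def, hvol]; simp
    rwa [h1, Real.one_rpow, mul_one] at H

lemma main_aux {d : ℕ} {p α β : ℝ} (hp : 1 ≤ p) (hα : 0 < α) (hβ : 0 < β)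
    {T : Set (EuclideanSpace ℝ (Fin d))} (hTconv : Convex ℝ T) (hTcomp : IsCompact T)
    (hvol : volume T = 1) {z₀ z₁ : EuclideanSpace ℝ (Fin d)} (hz₀ : z₀ ∈ T) (hz₁ : z₁ ∈ T)
    {g : EuclideanSpace ℝ (Fin d) → ℝ} (hg : Continuous g)
    (hkey : ∀ x, 2⁻¹ * g ((2⁻¹:ℝ) • (z₀ + x)) + 2⁻¹ * g ((2⁻¹:ℝ) • (z₁ + x))
        - g ((2⁻¹:ℝ) • ((2⁻¹:ℝ) • (z₀ + z₁) + x)) = dist z₀ z₁ ^ 2 / 16) :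
    min α β / (16 * 2 ^ (d + 1)) * dist z₀ z₁ ^ 2 ≤
      (∫ x in T, (α * max (g x) 0 + β * max (-g x) 0) ^ p) ^ (1 / p) := by
  have hTmeas : MeasurableSet T := hTcomp.isClosed.measurableSet
  haveI : IsFiniteMeasure (volume.restrict T) :=
    ⟨by rw [Measure.restrict_apply_univ, hvol]; exact ENNReal.one_lt_top⟩
  set K := ∫ x in T, |g x| with hK
  have hKnonneg : 0 ≤ K := integral_nonneg fun x => abs_nonneg _
  have hgInt : IntegrableOn g T volume := hg.continuousOn.integrableOn_compact hTcomp
  have hgAbsInt : IntegrableOn (fun x => |g x|) T volume := hgInt.abs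
  have hcomp : ∀ z : EuclideanSpace ℝ (Fin d),
      Continuous fun x : EuclideanSpace ℝ (Fin d) => g ((2⁻¹:ℝ) • (z + x)) := fun z =>
    hg.comp (by fun_prop)
  have hcompInt : ∀ z : EuclideanSpace ℝ (Fin d),
      IntegrableOn (fun x => g ((2⁻¹:ℝ) • (z + x))) T volume := fun z =>
    (hcomp z).continuousOn.integrableOn_compact hTcomp
  -- bound on the translated-scaled integrals
  have hAbound : ∀ z ∈ T, |∫ x in T, g ((2⁻¹:ℝ) • (z + x))| ≤ 2 ^ d * K := by
    intro z hz
    have hhalf : ((2:ℝ)⁻¹) ≠ 0 := by norm_num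
    have hinj : Function.Injective fun x : EuclideanSpace ℝ (Fin d) => (2⁻¹:ℝ) • (z + x) := by
      intro x y hxy
      have := smul_right_injective (EuclideanSpace ℝ (Fin d)) hhalf hxy
      exact add_left_cancel this
    set S := (fun x : EuclideanSpace ℝ (Fin d) => (2⁻¹:ℝ) • (z + x)) '' T with hS
    have hST : S ⊆ T := by
      rintro _ ⟨x, hx, rfl⟩
      simpa [smul_add] using hTconv hz hx (by norm_num) (by norm_num)
        (by norm_num : (2⁻¹:ℝ) + 2⁻¹ = 1)
    have hScomp : IsCompact S :=
      hTcomp.image (by fun_prop)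
    have hSmeas : MeasurableSet S := hScomp.isClosed.measurableSet
    have h1 : ∫ x in T, |g ((2⁻¹:ℝ) • (z + x))| = 2 ^ d * ∫ x in S, |g x| := by
      have hid : T.indicator (fun x => |g ((2⁻¹:ℝ) • (z + x))|)
          = fun x => S.indicator (fun y => |g y|) ((2⁻¹:ℝ) • z + (2⁻¹:ℝ) • x) := by
        funext x
        by_cases hx : x ∈ T
        · rw [Set.indicator_of_mem hx, ← smul_add,
            Set.indicator_of_mem (Set.mem_image_of_mem _ hx)]
        · rw [Set.indicator_of_notMem hx, ← smul_add, Set.indicator_of_notMem]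
          rintro ⟨x', hx', hxx⟩
          exact hx (by rwa [hinj hxx] at hx')
      rw [← integral_indicator hTmeas, hid]
      have h2 : ∫ x : EuclideanSpace ℝ (Fin d),
            S.indicator (fun y => |g y|) ((2⁻¹:ℝ) • z + (2⁻¹:ℝ) • x)
          = ((2:ℝ) ^ d) • ∫ x : EuclideanSpace ℝ (Fin d),
            S.indicator (fun y => |g y|) ((2⁻¹:ℝ) • z + x) := by
        have h3 := Measure.integral_comp_smul volume
          (fun x : EuclideanSpace ℝ (Fin d) => S.indicator (fun y => |g y|) ((2⁻¹:ℝ) • z + x))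
          2⁻¹
        rw [h3, finrank_euclideanSpace_fin, inv_pow, inv_inv,
          abs_of_nonneg (by positivity : (0:ℝ) ≤ 2 ^ d)]
      rw [h2, integral_add_left_eq_self (μ := volume) (S.indicator fun y => |g y|) ((2⁻¹:ℝ) • z),
        integral_indicator hSmeas, smul_eq_mul]
    have h2 : ∫ x in S, |g x| ≤ K :=
      setIntegral_mono_set hgAbsInt (Filter.Eventually.of_forall fun x => abs_nonneg _)
        (HasSubset.Subset.eventuallyLE hST)
    calc |∫ x in T, g ((2⁻¹:ℝ) • (z + x))|
        ≤ ∫ x in T, |g ((2⁻¹:ℝ) • (z + x))| := by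
          simpa [Real.norm_eq_abs] using
            norm_integral_le_integral_norm (μ := volume.restrict T)
              (fun x => g ((2⁻¹:ℝ) • (z + x)))
      _ = 2 ^ d * ∫ x in S, |g x| := h1
      _ ≤ 2 ^ d * K := by
          exact mul_le_mul_of_nonneg_left h2 (by positivity)
  set m : EuclideanSpace ℝ (Fin d) := (2⁻¹:ℝ) • (z₀ + z₁) with hm
  have hmT : m ∈ T := by
    simpa [hm, smul_add] using hTconv hz₀ hz₁ (by norm_num) (by norm_num)
      (by norm_num : (2⁻¹:ℝ) + 2⁻¹ = 1)
  have hvolT : (volume T).toReal = 1 := by rw [hvol]; simp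
  have hint : ∫ x in T, (2⁻¹ * g ((2⁻¹:ℝ) • (z₀ + x)) + 2⁻¹ * g ((2⁻¹:ℝ) • (z₁ + x))
      - g ((2⁻¹:ℝ) • (m + x))) = dist z₀ z₁ ^ 2 / 16 := by
    rw [setIntegral_congr_fun hTmeas (fun x _ => hkey x), setIntegral_const, measureReal_def, hvolT, one_smul]
  have hsplit : 2⁻¹ * (∫ x in T, g ((2⁻¹:ℝ) • (z₀ + x)))
      + 2⁻¹ * (∫ x in T, g ((2⁻¹:ℝ) • (z₁ + x)))
      - (∫ x in T, g ((2⁻¹:ℝ) • (m + x))) = dist z₀ z₁ ^ 2 / 16 := by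
    have I01 : IntegrableOn (fun x => 2⁻¹ * g ((2⁻¹:ℝ) • (z₀ + x))
        + 2⁻¹ * g ((2⁻¹:ℝ) • (z₁ + x))) T volume :=
      ((hcompInt z₀).const_mul _).add ((hcompInt z₁).const_mul _)
    rw [integral_sub I01 (hcompInt m),
      integral_add ((hcompInt z₀).const_mul _) ((hcompInt z₁).const_mul _),
      integral_const_mul, integral_const_mul] at hint
    exact hint
  have hmain : dist z₀ z₁ ^ 2 / 16 ≤ 2 ^ (d + 1) * K := by
    have b₀ := abs_le.1 (hAbound z₀ hz₀)
    have b₁ := abs_le.1 (hAbound z₁ hz₁)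
    have bm := abs_le.1 (hAbound m hmT)
    have hpow : (2:ℝ) ^ (d + 1) = 2 * 2 ^ d := by ring
    rw [← hsplit, hpow]
    linarith [b₀.2, b₁.2, bm.1]
  have hB : min α β * K ≤ ∫ x in T, (α * max (g x) 0 + β * max (-g x) 0) := by
    rw [hK, ← integral_const_mul]
    refine integral_mono (hgAbsInt.const_mul _)
      (((continuous_const.mul (hg.max continuous_const)).add
        (continuous_const.mul (hg.neg.max continuous_const))).continuousOn.integrableOn_compact
        hTcomp) fun x => ?_
    have habs : |g x| = max (g x) 0 + max (-g x) 0 :=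
      (max_zero_add_max_neg_zero_eq_abs_self _).symm
    rw [habs, mul_add]
    exact add_le_add
      (mul_le_mul_of_nonneg_right (min_le_left _ _) (le_max_right _ _))
      (mul_le_mul_of_nonneg_right (min_le_right _ _) (le_max_right _ _))
  have hC : min α β / (16 * 2 ^ (d + 1)) * dist z₀ z₁ ^ 2 ≤ min α β * K := by
    have h16 : dist z₀ z₁ ^ 2 ≤ 16 * 2 ^ (d + 1) * K := by linarith
    rw [div_mul_eq_mul_div, div_le_iff₀ (by positivity)]
    calc min α β * dist z₀ z₁ ^ 2 ≤ min α β * (16 * 2 ^ (d + 1) * K) :=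
          mul_le_mul_of_nonneg_left h16 (le_of_lt (lt_min hα hβ))
      _ = min α β * K * (16 * 2 ^ (d + 1)) := by ring
  calc min α β / (16 * 2 ^ (d + 1)) * dist z₀ z₁ ^ 2
      ≤ min α β * K := hC
    _ ≤ ∫ x in T, (α * max (g x) 0 + β * max (-g x) 0) := hB
    _ ≤ (∫ x in T, (α * max (g x) 0 + β * max (-g x) 0) ^ p) ^ (1 / p) := by
        refine holder_aux hp hTcomp hvol
          ((continuous_const.mul (hg.max continuous_const)).add
            (continuous_const.mul (hg.neg.max continuous_const))) fun x => ?_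
        positivity

/-- There is a constant `C > 0`, depending only on `d`, `p`, `α`, `β`, such that the
asymmetric `L_p`-error of best affine approximation of `Q` on any unit-volume
`d`-simplex `T` is at least `C * (diam T)²`. -/
theorem asymmetric_Lp_error_lower_bound_diam
    (d : ℕ) (hd : 0 < d) (p α β : ℝ) (hp : 1 ≤ p) (hα : 0 < α) (hβ : 0 < β) :
    ∃ C : ℝ, 0 < C ∧
      ∀ v : Fin (d + 1) → EuclideanSpace ℝ (Fin d),
        AffineIndependent ℝ v →
        volume (convexHull ℝ (Set.range v)) = 1 →
        Epab d p α β (convexHull ℝ (Set.range v)) ≥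
          C * (Metric.diam (convexHull ℝ (Set.range v))) ^ 2 := by
  refine ⟨min α β / (16 * 2 ^ (d + 1)), by positivity, ?_⟩
  intro v _ hvol
  set T : Set (EuclideanSpace ℝ (Fin d)) := convexHull ℝ (Set.range v) with hT
  have hTconv : Convex ℝ T := convex_convexHull ℝ _
  have hTcomp : IsCompact T := (Set.finite_range v).isCompact_convexHull ℝ
  obtain ⟨q, -, hq⟩ := Finset.exists_max_image (Finset.univ : Finset (Fin (d+1) × Fin (d+1)))
    (fun p => dist (v p.1) (v p.2)) ⟨(0, 0), Finset.mem_univ _⟩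
  have hdiam : Metric.diam T ≤ dist (v q.1) (v q.2) := by
    rw [hT, convexHull_diam]
    apply Metric.diam_le_of_forall_dist_le dist_nonneg
    rintro x ⟨i, rfl⟩ y ⟨j, rfl⟩
    exact hq (i, j) (Finset.mem_univ _)
  have hz₀ : v q.1 ∈ T := subset_convexHull ℝ _ ⟨q.1, rfl⟩
  have hz₁ : v q.2 ∈ T := subset_convexHull ℝ _ ⟨q.2, rfl⟩
  rw [ge_iff_le, Epab]
  refine le_trans ?_ (le_ciInf fun a => le_ciInf fun c =>
    main_aux hp hα hβ hTconv hTcomp hvol hz₀ hz₁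
      (g := fun x => (∑ j, x j ^ 2) - ((inner ℝ a x : ℝ) + c)) ?_ ?_)
  · exact mul_le_mul_of_nonneg_left
      (pow_le_pow_left₀ Metric.diam_nonneg hdiam 2) (by positivity)
  · refine Continuous.sub ?_ (Continuous.add ?_ continuous_const)
    · exact continuous_finset_sum _ fun j _ =>
        ((EuclideanSpace.proj j).continuous).pow 2
    · exact (innerSL ℝ a).continuous
  · exact fun x => key_identity a c _ _ x
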